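/- The compact lists form a submonoid of (L, ∗̄, []), and this submonoid is a free monoid: every nonempty compact list l can be written in exactly one way as l = l_1 ∗̄ l_2 ∗̄ ⋯ ∗̄ l_r where each l_i is a nonempty compact list admitting no factorization into a ∗̄-product of two nonempty lists. -/

import Mathlib

open scoped TensorProduct

/-- A monomial: a nonzero finitely supported multi-index with support contained in `{1,2,…}`. -/
def Mon : Type := {m : ℕ →₀ ℕ // m ≠ 0 ∧ m 0 = 0}

namespace Mon

/-- Product of monomials: pointwise addition of multi-indices. -/
noncomputable instance : Mul Mon :=
  ⟨fun a b =>
    ⟨a.1 + b.1, by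
      constructor
      · intro h
        exact a.2.1 ((add_eq_zero.mp h).1)
      · simp [Finsupp.add_apply, a.2.2, b.2.2]⟩⟩

/-- The total degree (weight) of a monomial. -/
def w (m : Mon) : ℕ := m.1.sum fun _ v => v

/-- The set of variable indices occurring in a list of monomials. -/
def IndAlph (l : List Mon) : Finset ℕ := (l.map fun m => m.1.support).foldr (· ∪ ·) ∅

/-- The maximal variable index occurring in a list of monomials (`0` for the empty list). -/
def maxInd (l : List Mon) : ℕ := (IndAlph l).sup id

/-- The embedding `i ↦ i + p` of `ℕ` into itself. -/
def addEmb (p : ℕ) : ℕ ↪ ℕ := ⟨fun i => i + p, fun a b h => by simpa using h⟩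

/-- The shift `T_p` of a monomial: translate the support by `p`. -/
noncomputable def Tmon (p : ℕ) (m : Mon) : Mon :=
  ⟨m.1.embDomain (addEmb p), by
    refine ⟨fun h => m.2.1 (Finsupp.embDomain_eq_zero.mp h), ?_⟩
    by_cases hp : p = 0
    · subst hp
      have h0 : (Finsupp.embDomain (addEmb 0) m.1) ((addEmb 0) 0) = m.1 0 :=
        Finsupp.embDomain_apply_self _ _ _
      simpa [addEmb] using h0.trans m.2.2
    · apply Finsupp.embDomain_notin_range
      rintro ⟨i, hi⟩
      have hi' : i + p = 0 := hi
      omega⟩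

/-- Shifted concatenation of lists of monomials. -/
noncomputable def sconc (l₁ l₂ : List Mon) : List Mon := l₁ ++ l₂.map (Tmon (maxInd l₁))

/-- A list of monomials is compact when its alphabet has no holes:
`IndAlph l = {1,…,card (IndAlph l)}`. -/
def Compact (l : List Mon) : Prop := IndAlph l = Finset.Icc 1 (IndAlph l).card

/-- The re-indexing function of a list `l` : on `IndAlph l` it is the unique strictly
increasing bijection onto `{1,…,card (IndAlph l)}` (extended injectively elsewhere). -/
noncomputable def phi (l : List Mon) (i : ℕ) : ℕ :=
  if h : i ∈ IndAlph l then
    (((IndAlph l).orderIsoOfFin rfl).symm ⟨i, h⟩ : Fin (IndAlph l).card) + 1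
  else i + (IndAlph l).card + 1

lemma phi_pos (l : List Mon) (i : ℕ) : 1 ≤ phi l i := by
  unfold phi; split_ifs <;> omega

lemma phi_inj (l : List Mon) : Function.Injective (phi l) := by
  intro a b hab
  unfold phi at hab
  split_ifs at hab with ha hb hb
  · have h1 : (((IndAlph l).orderIsoOfFin rfl).symm ⟨a, ha⟩) =
        (((IndAlph l).orderIsoOfFin rfl).symm ⟨b, hb⟩) := Fin.ext (by omega)
    have h2 := congrArg ((IndAlph l).orderIsoOfFin rfl) h1
    rw [OrderIso.apply_symm_apply, OrderIso.apply_symm_apply] at h2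
    exact congrArg Subtype.val h2
  · have := (((IndAlph l).orderIsoOfFin rfl).symm ⟨a, ha⟩).isLt; omega
  · have := (((IndAlph l).orderIsoOfFin rfl).symm ⟨b, hb⟩).isLt; omega
  · omega

/-- Action of the compacting operator of `l` on a single monomial. -/
noncomputable def cptMon (l : List Mon) (m : Mon) : Mon :=
  ⟨m.1.mapDomain (phi l), by
    constructor
    · intro h
      apply m.2.1
      exact Finsupp.mapDomain_injective (phi_inj l) (by simpa using h)
    · apply Finsupp.mapDomain_notin_range
      rintro ⟨i, hi⟩
      have := phi_pos l i
      omega⟩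

/-- The compacting operator on lists of monomials. -/
noncomputable def cpt (l : List Mon) : List Mon := l.map (cptMon l)

/-- `sub l I` is the sublist of `l` consisting of the entries whose (1-based) position
belongs to `I`. -/
def sub (l : List Mon) (I : Finset ℕ) : List Mon :=
  (List.range l.length).filterMap fun j => if j + 1 ∈ I then l[j]? else none

/-- `∗̄`-irreducible lists: nonempty and with no factorization into two nonempty lists. -/
def SIrred (l : List Mon) : Prop :=
  l ≠ [] ∧ ∀ u v : List Mon, l = sconc u v → u = [] ∨ v = []

end Mon
namespace Mon

lemma addEmb_apply (p i : ℕ) : addEmb p i = i + p := rfl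

lemma IndAlph_nil : IndAlph [] = ∅ := rfl

lemma IndAlph_cons (a : Mon) (t : List Mon) :
    IndAlph (a :: t) = a.1.support ∪ IndAlph t := rfl

lemma IndAlph_append (a b : List Mon) : IndAlph (a ++ b) = IndAlph a ∪ IndAlph b := by
  induction a with
  | nil => simp [IndAlph_nil]
  | cons x t ih => simp [IndAlph_cons, ih, Finset.union_assoc]

lemma mem_IndAlph {l : List Mon} {i : ℕ} :
    i ∈ IndAlph l ↔ ∃ m ∈ l, i ∈ m.1.support := by
  induction l with
  | nil => simp [IndAlph_nil]
  | cons a t ih => simp [IndAlph_cons, ih]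

lemma one_le_of_mem_IndAlph {l : List Mon} {i : ℕ} (h : i ∈ IndAlph l) : 1 ≤ i := by
  obtain ⟨m, _, hm⟩ := mem_IndAlph.mp h
  rcases Nat.eq_zero_or_pos i with rfl | h1
  · exact absurd m.2.2 (Finsupp.mem_support_iff.mp hm)
  · exact h1

lemma IndAlph_eq_empty {l : List Mon} : IndAlph l = ∅ ↔ l = [] := by
  constructor
  · intro h
    cases l with
    | nil => rfl
    | cons a t =>
      exfalso
      obtain ⟨i, hi⟩ := Finsupp.support_nonempty_iff.mpr a.2.1
      have : i ∈ IndAlph (a :: t) := mem_IndAlph.mpr ⟨a, by simp, hi⟩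
      simp [h] at this
  · rintro rfl; rfl

lemma le_maxInd {l : List Mon} {i : ℕ} (h : i ∈ IndAlph l) : i ≤ maxInd l :=
  Finset.le_sup (f := id) h

lemma maxInd_mem {l : List Mon} (h : l ≠ []) : maxInd l ∈ IndAlph l := by
  have hne : (IndAlph l).Nonempty :=
    Finset.nonempty_iff_ne_empty.mpr (fun he => h (IndAlph_eq_empty.mp he))
  obtain ⟨b, hb, he⟩ := Finset.exists_mem_eq_sup (IndAlph l) hne id
  rw [maxInd, he]; exact hb

lemma one_le_maxInd {l : List Mon} (h : l ≠ []) : 1 ≤ maxInd l :=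
  one_le_of_mem_IndAlph (maxInd_mem h)

lemma support_Tmon (p : ℕ) (m : Mon) :
    (Tmon p m).1.support = m.1.support.map (addEmb p) :=
  Finsupp.support_embDomain _ _

lemma Tmon_zero (m : Mon) : Tmon 0 m = m := by
  apply Subtype.ext
  ext i
  have h := Finsupp.embDomain_apply_self (addEmb 0) m.1 i
  simpa [addEmb_apply, Tmon] using h

lemma Tmon_injective (p : ℕ) : Function.Injective (Tmon p) := by
  intro a b h
  exact Subtype.ext (Finsupp.embDomain_injective _ (congrArg Subtype.val h))

lemma Tmon_Tmon (p q : ℕ) (m : Mon) : Tmon p (Tmon q m) = Tmon (p + q) m := by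
  apply Subtype.ext
  show Finsupp.embDomain (addEmb p) (Finsupp.embDomain (addEmb q) m.1)
      = Finsupp.embDomain (addEmb (p + q)) m.1
  rw [Finsupp.embDomain_eq_mapDomain, Finsupp.embDomain_eq_mapDomain,
    Finsupp.embDomain_eq_mapDomain, ← Finsupp.mapDomain_comp]
  apply Finsupp.mapDomain_congr
  intro x _
  simp only [Function.comp_apply, addEmb_apply]
  omega

lemma exists_Tmon {p : ℕ} {m : Mon} (h : ∀ i ∈ m.1.support, p < i) :
    ∃ m', Tmon p m' = m := by
  have hinj : Function.Injective (addEmb p) := (addEmb p).injective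
  have hsub : ↑m.1.support ⊆ Set.range (addEmb p) := by
    intro i hi
    refine ⟨i - p, ?_⟩
    simp only [addEmb_apply]
    have := h i (Finset.mem_coe.mp hi)
    omega
  have key : Finsupp.embDomain (addEmb p) (Finsupp.comapDomain (addEmb p) m.1 hinj.injOn) = m.1 :=
    Finsupp.embDomain_comapDomain (f := addEmb p) hsub
  refine ⟨⟨Finsupp.comapDomain (addEmb p) m.1 hinj.injOn, ?_, ?_⟩, Subtype.ext key⟩
  · intro h0
    apply m.2.1
    rw [← key, h0, Finsupp.embDomain_zero]
  · show m.1 (addEmb p 0) = 0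
    by_contra hne
    have : (0 : ℕ) + p ∈ m.1.support := Finsupp.mem_support_iff.mpr hne
    have := h _ this
    omega

lemma IndAlph_map_Tmon (p : ℕ) (l : List Mon) :
    IndAlph (l.map (Tmon p)) = (IndAlph l).map (addEmb p) := by
  induction l with
  | nil => simp [IndAlph_nil]
  | cons a t ih => simp [IndAlph_cons, support_Tmon, ih, Finset.map_union]

lemma IndAlph_sconc (u v : List Mon) :
    IndAlph (sconc u v) = IndAlph u ∪ (IndAlph v).map (addEmb (maxInd u)) := by
  rw [sconc, IndAlph_append, IndAlph_map_Tmon]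

lemma sconc_nil (u : List Mon) : sconc u [] = u := by simp [sconc]

lemma nil_sconc (v : List Mon) : sconc [] v = v := by
  simp only [sconc, List.nil_append]
  have : maxInd ([] : List Mon) = 0 := by simp [maxInd, IndAlph_nil]
  rw [this]
  conv_rhs => rw [← List.map_id v]
  exact List.map_congr_left (fun m _ => Tmon_zero m)

lemma length_sconc (u v : List Mon) : (sconc u v).length = u.length + v.length := by
  simp [sconc]

lemma sconc_eq_nil {u v : List Mon} : sconc u v = [] ↔ u = [] ∧ v = [] := by
  constructor
  · intro h
    rcases List.append_eq_nil_iff.mp h with ⟨h1, h2⟩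
    exact ⟨h1, List.map_eq_nil_iff.mp h2⟩
  · rintro ⟨rfl, rfl⟩; rfl

lemma maxInd_sconc (u v : List Mon) : maxInd (sconc u v) = maxInd u + maxInd v := by
  rcases eq_or_ne v [] with rfl | hv
  · simp [sconc_nil, maxInd, IndAlph_nil]
  · rw [maxInd, IndAlph_sconc, Finset.sup_union, Finset.sup_map]
    have h1 : (IndAlph v).sup (id ∘ addEmb (maxInd u)) = maxInd v + maxInd u := by
      apply le_antisymm
      · apply Finset.sup_le
        intro i hi
        simp only [Function.comp, addEmb, Function.Embedding.coeFn_mk, id]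
        exact Nat.add_le_add_right (le_maxInd hi) _
      · have := Finset.le_sup (f := id ∘ addEmb (maxInd u)) (maxInd_mem hv)
        simpa [addEmb_apply] using this
    rw [h1]
    have h2 : 1 ≤ maxInd v := one_le_maxInd hv
    have h3 : (IndAlph u).sup id = maxInd u := rfl
    rw [h3]
    omega

lemma sconc_assoc (u v w : List Mon) : sconc (sconc u v) w = sconc u (sconc v w) := by
  have hc : Tmon (maxInd u) ∘ Tmon (maxInd v) = Tmon (maxInd u + maxInd v) :=
    funext fun m => Tmon_Tmon _ _ m
  rw [show sconc (sconc u v) w = (sconc u v) ++ List.map (Tmon (maxInd (sconc u v))) w from rfl,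
    maxInd_sconc]
  simp only [sconc, List.map_append, List.map_map, List.append_assoc, hc]

lemma sconc_left_cancel {u v v' : List Mon} (h : sconc u v = sconc u v') : v = v' := by
  have h2 := List.append_cancel_left h
  exact List.map_injective_iff.mpr (Tmon_injective _) h2

end Mon
namespace Mon

lemma compact_nil : Compact ([] : List Mon) := by
  simp [Compact, IndAlph_nil]

lemma maxInd_compact {l : List Mon} (h : Compact l) : maxInd l = (IndAlph l).card := by
  apply le_antisymm
  · apply Finset.sup_le
    intro i hi
    rw [h] at hi
    exact (Finset.mem_Icc.mp hi).2
  · obtain ⟨n, hn⟩ : ∃ n, (IndAlph l).card = n := ⟨_, rfl⟩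
    have h' : IndAlph l = Finset.Icc 1 n := by rw [← hn]; exact h
    rw [hn]
    rcases Nat.eq_zero_or_pos n with h0 | h1
    · rw [h0]; exact Nat.zero_le _
    · exact Finset.le_sup (f := id) (by rw [h']; exact Finset.mem_Icc.mpr ⟨h1, le_refl _⟩)

lemma compact_sconc (u v : List Mon) (hu : Compact u) (hv : Compact v) :
    Compact (sconc u v) := by
  set a := (IndAlph u).card with ha
  set b := (IndAlph v).card with hb
  have hmu : maxInd u = a := maxInd_compact hu
  have key : IndAlph (sconc u v) = Finset.Icc 1 (a + b) := by
    rw [IndAlph_sconc, hmu, hu, hv]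
    ext i
    simp only [Finset.mem_union, Finset.mem_Icc, Finset.mem_map, addEmb_apply]
    constructor
    · rintro (⟨h1, h2⟩ | ⟨j, ⟨hj1, hj2⟩, rfl⟩) <;> omega
    · rintro ⟨h1, h2⟩
      rcases le_or_gt i a with hle | hlt
      · left; exact ⟨h1, hle⟩
      · right; exact ⟨i - a, ⟨by omega, by omega⟩, by omega⟩
  rw [Compact, key, Nat.card_Icc]
  norm_num

lemma compact_of_sconc {u v : List Mon} (h : Compact (sconc u v)) :
    Compact u ∧ Compact v := by
  rcases eq_or_ne u [] with rfl | hu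
  · rw [nil_sconc] at h
    exact ⟨compact_nil, h⟩
  set N := (IndAlph (sconc u v)).card with hN
  set mu := maxInd u with hmu
  have hS : IndAlph u ∪ (IndAlph v).map (addEmb mu) = Finset.Icc 1 N := by
    rw [← IndAlph_sconc]; exact h
  have hmuN : mu ≤ N := by
    have : mu ∈ Finset.Icc 1 N := by
      rw [← hS]
      exact Finset.mem_union_left _ (maxInd_mem hu)
    exact (Finset.mem_Icc.mp this).2
  have hA : IndAlph u = Finset.Icc 1 mu := by
    ext i
    simp only [Finset.mem_Icc]
    constructor
    · intro hi
      exact ⟨one_le_of_mem_IndAlph hi, le_maxInd hi⟩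
    · rintro ⟨h1, h2⟩
      have hiS : i ∈ IndAlph u ∪ (IndAlph v).map (addEmb mu) := by
        rw [hS]; exact Finset.mem_Icc.mpr ⟨h1, le_trans h2 hmuN⟩
      rcases Finset.mem_union.mp hiS with hi | hi
      · exact hi
      · exfalso
        obtain ⟨j, hj, hji⟩ := Finset.mem_map.mp hi
        have := one_le_of_mem_IndAlph hj
        simp only [addEmb_apply] at hji
        omega
  have hcu : Compact u := by
    rw [Compact, hA, Nat.card_Icc]
    norm_num
  refine ⟨hcu, ?_⟩
  have hB : IndAlph v = Finset.Icc 1 (N - mu) := by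
    ext j
    simp only [Finset.mem_Icc]
    constructor
    · intro hj
      have : j + mu ∈ Finset.Icc 1 N := by
        rw [← hS]
        exact Finset.mem_union_right _ (Finset.mem_map.mpr ⟨j, hj, rfl⟩)
      have := (Finset.mem_Icc.mp this).2
      exact ⟨one_le_of_mem_IndAlph hj, by omega⟩
    · rintro ⟨h1, h2⟩
      have hjS : j + mu ∈ IndAlph u ∪ (IndAlph v).map (addEmb mu) := by
        rw [hS]; exact Finset.mem_Icc.mpr ⟨by omega, by omega⟩
      rcases Finset.mem_union.mp hjS with hi | hi
      · exfalso
        have := le_maxInd hi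
        omega
      · obtain ⟨j', hj', hjj⟩ := Finset.mem_map.mp hi
        simp only [addEmb_apply] at hjj
        have : j' = j := by omega
        rwa [← this]
  rw [Compact, hB, Nat.card_Icc]
  norm_num

lemma sconc_split {u v u' v' : List Mon} (h : sconc u v = sconc u' v')
    (hle : u.length ≤ u'.length) : ∃ w, u' = sconc u w ∧ v = sconc w v' := by
  set mu := maxInd u with hmu
  set d := u'.length - u.length with hd
  have hlen : (List.map (Tmon mu) v).length = v.length := by simp
  have hlen' : u'.length = u.length + d := by omega
  have hu' : u' = u ++ List.map (Tmon mu) (v.take d) := by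
    have h1 : (sconc u v).take u'.length = u ++ (List.map (Tmon mu) v).take d := by
      rw [sconc, hlen', List.take_append]
      simp [hmu]
    have h2 : (sconc u' v').take u'.length = u' := by
      rw [sconc, List.take_left]
    rw [← h2, ← h, h1, List.map_take]
  refine ⟨v.take d, hu', ?_⟩
  have hmu' : maxInd u' = mu + maxInd (v.take d) := by
    rw [hu']
    exact maxInd_sconc u (v.take d)
  -- now compare the tails
  have htail : List.map (Tmon mu) (v.drop d) = List.map (Tmon (maxInd u')) v' := by
    have h1 : (sconc u v).drop u'.length = (List.map (Tmon mu) v).drop d := by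
      rw [sconc, hlen', List.drop_append]
      simp [hmu]
    have h2 : (sconc u' v').drop u'.length = List.map (Tmon (maxInd u')) v' := by
      rw [sconc, List.drop_left]
    rw [List.map_drop, ← h1, h, h2]
  have hcomp : Tmon mu ∘ Tmon (maxInd (v.take d)) = Tmon (maxInd u') := by
    funext m
    rw [Function.comp_apply, Tmon_Tmon, hmu']
  have hdrop : v.drop d = List.map (Tmon (maxInd (v.take d))) v' := by
    apply List.map_injective_iff.mpr (Tmon_injective mu)
    rw [htail, List.map_map, hcomp]
  rw [sconc, ← hdrop, List.take_append_drop]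

end Mon
namespace Mon

lemma foldr_sconc_append (A B : List (List Mon)) :
    (A ++ B).foldr sconc [] = sconc (A.foldr sconc []) (B.foldr sconc []) := by
  induction A with
  | nil => simp [nil_sconc]
  | cons a t ih => simp only [List.cons_append, List.foldr_cons, ih, sconc_assoc]

lemma foldr_sconc_eq_nil {fs : List (List Mon)} (h : ∀ x ∈ fs, SIrred x)
    (hf : fs.foldr sconc [] = []) : fs = [] := by
  cases fs with
  | nil => rfl
  | cons f t =>
    exfalso
    rw [List.foldr_cons, sconc_eq_nil] at hf
    exact (h f (by simp)).1 hf.1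

lemma exists_fact : ∀ n : ℕ, ∀ l : List Mon, l.length ≤ n → Compact l → l ≠ [] →
    ∃ fs : List (List Mon),
      (∀ x ∈ fs, Compact x ∧ SIrred x) ∧ fs.foldr sconc [] = l := by
  intro n
  induction n with
  | zero =>
    intro l hl _ hne
    exact absurd (List.length_eq_zero_iff.mp (Nat.le_zero.mp hl)) hne
  | succ n ih =>
    intro l hl hc hne
    by_cases hirr : SIrred l
    · exact ⟨[l], by simp [hc, hirr], by simp [sconc_nil]⟩
    · rw [SIrred, not_and_or] at hirr
      rcases hirr with h1 | h2
      · exact absurd hne (by simpa using h1)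
      · push_neg at h2
        obtain ⟨u, v, huv, hu, hv⟩ := h2
        have hcu := (compact_of_sconc (huv ▸ hc)).1
        have hcv := (compact_of_sconc (huv ▸ hc)).2
        have hlu : 1 ≤ u.length := List.length_pos_iff.mpr hu
        have hlv : 1 ≤ v.length := List.length_pos_iff.mpr hv
        have hlen : l.length = u.length + v.length := by rw [huv, length_sconc]
        obtain ⟨fu, hfu1, hfu2⟩ := ih u (by omega) hcu hu
        obtain ⟨fv, hfv1, hfv2⟩ := ih v (by omega) hcv hv
        refine ⟨fu ++ fv, ?_, ?_⟩
        · intro x hx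
          rcases List.mem_append.mp hx with hx | hx
          · exact hfu1 x hx
          · exact hfv1 x hx
        · rw [foldr_sconc_append, hfu2, hfv2, huv]

lemma uniq_fact : ∀ n : ℕ, ∀ fs gs : List (List Mon),
    (∀ x ∈ fs, Compact x ∧ SIrred x) → (∀ x ∈ gs, Compact x ∧ SIrred x) →
    fs.foldr sconc [] = gs.foldr sconc [] → (fs.foldr sconc []).length ≤ n → fs = gs := by
  intro n
  induction n with
  | zero =>
    intro fs gs hfs hgs heq hlen
    have h0 : fs.foldr sconc [] = [] := List.length_eq_zero_iff.mp (Nat.le_zero.mp hlen)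
    rw [foldr_sconc_eq_nil (fun x hx => (hfs x hx).2) h0,
      foldr_sconc_eq_nil (fun x hx => (hgs x hx).2) (heq ▸ h0)]
  | succ n ih =>
    intro fs gs hfs hgs heq hlen
    cases fs with
    | nil =>
      exact (foldr_sconc_eq_nil (fun x hx => (hgs x hx).2) heq.symm).symm
    | cons f t =>
      cases gs with
      | nil =>
        exact absurd (foldr_sconc_eq_nil (fun x hx => (hfs x hx).2) heq) (by simp)
      | cons g s =>
        simp only [List.foldr_cons] at heq
        have hf := hfs f (by simp)
        have hg := hgs g (by simp)
        have hfg : f = g := by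
          rcases le_total f.length g.length with hle | hle
          · obtain ⟨w, hw1, _⟩ := sconc_split heq hle
            rcases hg.2.2 f w hw1 with h' | h'
            · exact absurd h' hf.2.1
            · rw [hw1, h', sconc_nil]
          · obtain ⟨w, hw1, _⟩ := sconc_split heq.symm hle
            rcases hf.2.2 g w hw1 with h' | h'
            · exact absurd h' hg.2.1
            · rw [hw1, h', sconc_nil]
        subst hfg
        have hr : t.foldr sconc [] = s.foldr sconc [] := sconc_left_cancel heq
        have hflen : 1 ≤ f.length := List.length_pos_iff.mpr hf.2.1
        have hts : t = s := by
          apply ih t s (fun x hx => hfs x (by simp [hx])) (fun x hx => hgs x (by simp [hx])) hr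
          have := hlen
          simp only [List.foldr_cons, length_sconc] at this
          omega
        rw [hts]

end Mon
/-- ** Statement 4 **: compact lists form a submonoid, which is free:
every nonempty compact list factors uniquely into compact irreducible lists. -/
theorem compact_submonoid_free :
    Mon.Compact ([] : List Mon) ∧
    (∀ u v : List Mon, Mon.Compact u → Mon.Compact v → Mon.Compact (Mon.sconc u v)) ∧
    (∀ l : List Mon, Mon.Compact l → l ≠ [] →
      ∃! fs : List (List Mon),
        (∀ x ∈ fs, Mon.Compact x ∧ Mon.SIrred x) ∧ fs.foldr Mon.sconc [] = l) := by
  refine ⟨Mon.compact_nil, Mon.compact_sconc, ?_⟩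
  intro l hc hne
  obtain ⟨fs, h1, h2⟩ := Mon.exists_fact l.length l (le_refl _) hc hne
  refine ⟨fs, ⟨h1, h2⟩, ?_⟩
  rintro gs ⟨hg1, hg2⟩
  exact Mon.uniq_fact l.length gs fs hg1 h1 (by rw [hg2, h2]) (by rw [hg2])
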